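/- Let f be a holomorphic (ℂ-differentiable) function defined on an open subset O of Mat(2,ℂ) containing all of SL(2,ℂ), and suppose that for every U ∈ SL(2,ℂ) one has (∂₊₊ f)(U) = 0 and (∂₀ f)(U) = f(U) (i.e. f is analytic of charge +1). Then f is linear in the first column of U on SL(2,ℂ): there exist constants f₁, f₂ ∈ ℂ such that f(U) = f₁ · U₀₀ + f₂ · U₁₀ for all U ∈ SL(2,ℂ). -/

import Mathlib

open Complex

noncomputable section

/-- The determinant of a 2×2 complex matrix, viewed as an element of `Fin 2 → Fin 2 → ℂ`. -/
def det2 (U : Fin 2 → Fin 2 → ℂ) : ℂ := U 0 0 * U 1 1 - U 0 1 * U 1 0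

/-- The direction `U·E` with `E = [[0,1],[0,0]]`, defining the fundamental vector
field `∂₊₊` of the right `SL(2,ℂ)`-action: `(U·E)_{i0} = 0`, `(U·E)_{i1} = U_{i0}`. -/
def dirE (U : Fin 2 → Fin 2 → ℂ) : Fin 2 → Fin 2 → ℂ :=
  fun i j => if j = 1 then U i 0 else 0

/-- The direction `U·H` with `H = [[1,0],[0,−1]]`, defining the fundamental vector
field `∂₀` of the right `SL(2,ℂ)`-action: `(U·H)_{i0} = U_{i0}`, `(U·H)_{i1} = −(U_{i1})`. -/
def dirH (U : Fin 2 → Fin 2 → ℂ) : Fin 2 → Fin 2 → ℂ :=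
  fun i j => if j = 0 then U i 0 else -(U i 1)

namespace ChargeOne

def colAdd (U : Fin 2 → Fin 2 → ℂ) (z : ℂ) : Fin 2 → Fin 2 → ℂ :=
  fun i j => if j = 0 then U i 0 else U i 1 + z * U i 0

def colScale (U : Fin 2 → Fin 2 → ℂ) (z : ℂ) : Fin 2 → Fin 2 → ℂ :=
  fun i j => if j = 0 then Complex.exp z * U i 0 else Complex.exp (-z) * U i 1

lemma colAdd_eq (U : Fin 2 → Fin 2 → ℂ) (z : ℂ) :
    colAdd U z = U + z • dirE U := by
  funext i j
  fin_cases j <;> simp [colAdd, dirE]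

lemma dirE_colAdd (U : Fin 2 → Fin 2 → ℂ) (z : ℂ) :
    dirE (colAdd U z) = dirE U := by
  funext i j
  fin_cases j <;> simp [colAdd, dirE]

lemma det2_colAdd (U : Fin 2 → Fin 2 → ℂ) (z : ℂ) :
    det2 (colAdd U z) = det2 U := by
  simp only [det2, colAdd]
  norm_num
  ring

lemma det2_colScale (U : Fin 2 → Fin 2 → ℂ) (z : ℂ) :
    det2 (colScale U z) = det2 U := by
  simp only [det2, colScale]
  norm_num
  have h : Complex.exp z * Complex.exp (-z) = 1 := by
    rw [← Complex.exp_add]; simp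
  calc Complex.exp z * U 0 0 * (Complex.exp (-z) * U 1 1)
        - Complex.exp (-z) * U 0 1 * (Complex.exp z * U 1 0)
      = (Complex.exp z * Complex.exp (-z)) * (U 0 0 * U 1 1 - U 0 1 * U 1 0) := by ring
    _ = U 0 0 * U 1 1 - U 0 1 * U 1 0 := by rw [h]; ring

lemma colAdd_zero (U : Fin 2 → Fin 2 → ℂ) : colAdd U 0 = U := by
  funext i j; fin_cases j <;> simp [colAdd]

lemma colScale_zero (U : Fin 2 → Fin 2 → ℂ) : colScale U 0 = U := by
  funext i j; fin_cases j <;> simp [colScale]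

lemma hasDerivAt_colScale (U : Fin 2 → Fin 2 → ℂ) (z : ℂ) :
    HasDerivAt (fun w => colScale U w) (dirH (colScale U z)) z := by
  rw [hasDerivAt_pi]
  intro i
  rw [hasDerivAt_pi]
  intro j
  fin_cases j
  · simpa [colScale, dirH] using (Complex.hasDerivAt_exp z).mul_const (U i 0)
  · have h1 : HasDerivAt (fun w : ℂ => Complex.exp (-w)) (-Complex.exp (-z)) z := by
      exact ((Complex.hasDerivAt_exp (-z)).comp z (hasDerivAt_neg z)).congr_deriv (by ring)
    simpa [colScale, dirH] using h1.mul_const (U i 1)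

end ChargeOne

namespace ChargeOne

variable {O : Set (Fin 2 → Fin 2 → ℂ)} {f : (Fin 2 → Fin 2 → ℂ) → ℂ}

lemma diffAt (hO : IsOpen O) (hSL : {U : Fin 2 → Fin 2 → ℂ | det2 U = 1} ⊆ O)
    (hf : DifferentiableOn ℂ f O) {U : Fin 2 → Fin 2 → ℂ} (hU : det2 U = 1) :
    DifferentiableAt ℂ f U :=
  (hf U (hSL hU)).differentiableAt (hO.mem_nhds (hSL hU))

lemma flowE (hO : IsOpen O) (hSL : {U : Fin 2 → Fin 2 → ℂ | det2 U = 1} ⊆ O)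
    (hf : DifferentiableOn ℂ f O)
    (hE : ∀ U : Fin 2 → Fin 2 → ℂ, det2 U = 1 → fderiv ℂ f U (dirE U) = 0)
    {U : Fin 2 → Fin 2 → ℂ} (hU : det2 U = 1) (z : ℂ) :
    f (colAdd U z) = f U := by
  have key : ∀ w : ℂ, HasDerivAt (fun w => f (colAdd U w)) 0 w := by
    intro w
    have hdet : det2 (colAdd U w) = 1 := by rw [det2_colAdd]; exact hU
    have h1 : HasDerivAt (fun w => colAdd U w) (dirE U) w := by
      have he : (fun w => colAdd U w) = fun w : ℂ => U + w • dirE U := by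
        funext w; exact colAdd_eq U w
      rw [he]
      simpa using ((hasDerivAt_id w).smul_const (dirE U)).const_add U
    have h2 := ((diffAt hO hSL hf hdet).hasFDerivAt).comp_hasDerivAt w h1
    have h3 : fderiv ℂ f (colAdd U w) (dirE U) = 0 := by
      rw [← dirE_colAdd U w]; exact hE _ hdet
    rw [h3] at h2; exact h2
  have hd : Differentiable ℂ (fun w => f (colAdd U w)) := fun w => (key w).differentiableAt
  have hz : ∀ w, deriv (fun w => f (colAdd U w)) w = 0 := fun w => (key w).deriv
  have := is_const_of_deriv_eq_zero hd hz z 0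
  simpa [colAdd_zero] using this

lemma flowH (hO : IsOpen O) (hSL : {U : Fin 2 → Fin 2 → ℂ | det2 U = 1} ⊆ O)
    (hf : DifferentiableOn ℂ f O)
    (hH : ∀ U : Fin 2 → Fin 2 → ℂ, det2 U = 1 → fderiv ℂ f U (dirH U) = f U)
    {U : Fin 2 → Fin 2 → ℂ} (hU : det2 U = 1) (z : ℂ) :
    f (colScale U z) = Complex.exp z * f U := by
  have key : ∀ w : ℂ, HasDerivAt (fun w => f (colScale U w)) (f (colScale U w)) w := by
    intro w
    have hdet : det2 (colScale U w) = 1 := by rw [det2_colScale]; exact hU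
    have h2 := ((diffAt hO hSL hf hdet).hasFDerivAt).comp_hasDerivAt w
      (hasDerivAt_colScale U w)
    rwa [hH _ hdet] at h2
  have keyr : ∀ w : ℂ, HasDerivAt
      (fun w => Complex.exp (-w) * f (colScale U w)) 0 w := by
    intro w
    have h1 : HasDerivAt (fun w : ℂ => Complex.exp (-w)) (-Complex.exp (-w)) w := by
      exact ((Complex.hasDerivAt_exp (-w)).comp w (hasDerivAt_neg w)).congr_deriv (by ring)
    have := h1.mul (key w)
    exact this.congr_deriv (by ring)
  have hd : Differentiable ℂ (fun w => Complex.exp (-w) * f (colScale U w)) :=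
    fun w => (keyr w).differentiableAt
  have hz : ∀ w, deriv (fun w => Complex.exp (-w) * f (colScale U w)) w = 0 :=
    fun w => (keyr w).deriv
  have hc := is_const_of_deriv_eq_zero hd hz z 0
  simp only [neg_zero, Complex.exp_zero, one_mul, colScale_zero] at hc
  have : Complex.exp z * (Complex.exp (-z) * f (colScale U z)) = Complex.exp z * f U := by
    rw [hc]
  rwa [← mul_assoc, ← Complex.exp_add, add_neg_cancel, Complex.exp_zero, one_mul] at this

end ChargeOne

namespace ChargeOne

/-- Lower unitriangular family: first column `(1,t)`, second `(0,1)`. -/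
def Gm (t : ℂ) : Fin 2 → Fin 2 → ℂ :=
  fun i j => if j = 0 then (if i = 0 then 1 else t) else (if i = 0 then 0 else 1)

/-- Family with first column `(s,1)`, second `(-1,0)`. -/
def Nm (s : ℂ) : Fin 2 → Fin 2 → ℂ :=
  fun i j => if j = 0 then (if i = 0 then s else 1) else (if i = 0 then -1 else 0)

lemma det2_Gm (t : ℂ) : det2 (Gm t) = 1 := by simp [det2, Gm]

lemma det2_Nm (s : ℂ) : det2 (Nm s) = 1 := by simp [det2, Nm]

lemma differentiable_Gm : Differentiable ℂ Gm := by
  intro t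
  rw [differentiableAt_pi]
  intro i
  rw [differentiableAt_pi]
  intro j
  fin_cases i <;> fin_cases j <;> simp [Gm] <;>
    first
      | exact differentiableAt_const _
      | exact differentiableAt_id'

lemma differentiable_Nm : Differentiable ℂ Nm := by
  intro t
  rw [differentiableAt_pi]
  intro i
  rw [differentiableAt_pi]
  intro j
  fin_cases i <;> fin_cases j <;> simp [Nm] <;>
    first
      | exact differentiableAt_const _
      | exact differentiableAt_id'

variable {O : Set (Fin 2 → Fin 2 → ℂ)} {f : (Fin 2 → Fin 2 → ℂ) → ℂ}

lemma relGN (hO : IsOpen O) (hSL : {U : Fin 2 → Fin 2 → ℂ | det2 U = 1} ⊆ O)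
    (hf : DifferentiableOn ℂ f O)
    (hE : ∀ U : Fin 2 → Fin 2 → ℂ, det2 U = 1 → fderiv ℂ f U (dirE U) = 0)
    (hH : ∀ U : Fin 2 → Fin 2 → ℂ, det2 U = 1 → fderiv ℂ f U (dirH U) = f U)
    {t : ℂ} (ht : t ≠ 0) :
    f (Gm t) = t * f (Nm t⁻¹) := by
  obtain ⟨z, hz⟩ : ∃ z : ℂ, Complex.exp z = t := by
    have : t ∈ Set.range Complex.exp := by rw [Complex.range_exp]; exact ht
    exact this
  have hzneg : Complex.exp (-z) = t⁻¹ := by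
    rw [Complex.exp_neg, hz]
  have hkey : colAdd (colScale (Nm t⁻¹) z) t⁻¹ = Gm t := by
    funext i j
    fin_cases i <;> fin_cases j <;>
      simp [colAdd, colScale, Nm, Gm, hz, hzneg] <;> field_simp <;> ring
  have hdet : det2 (colScale (Nm t⁻¹) z) = 1 := by
    rw [det2_colScale]; exact det2_Nm _
  calc f (Gm t) = f (colAdd (colScale (Nm t⁻¹) z) t⁻¹) := by rw [hkey]
    _ = f (colScale (Nm t⁻¹) z) := flowE hO hSL hf hE hdet _
    _ = Complex.exp z * f (Nm t⁻¹) := flowH hO hSL hf hH (det2_Nm _) z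
    _ = t * f (Nm t⁻¹) := by rw [hz]

end ChargeOne

namespace ChargeOne

variable {O : Set (Fin 2 → Fin 2 → ℂ)} {f : (Fin 2 → Fin 2 → ℂ) → ℂ}

lemma linearGN (hO : IsOpen O) (hSL : {U : Fin 2 → Fin 2 → ℂ | det2 U = 1} ⊆ O)
    (hf : DifferentiableOn ℂ f O)
    (hE : ∀ U : Fin 2 → Fin 2 → ℂ, det2 U = 1 → fderiv ℂ f U (dirE U) = 0)
    (hH : ∀ U : Fin 2 → Fin 2 → ℂ, det2 U = 1 → fderiv ℂ f U (dirH U) = f U) :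
    (∀ t : ℂ, f (Gm t) = f (Gm 0) + f (Nm 0) * t) ∧
    (∀ s : ℂ, f (Nm s) = f (Gm 0) * s + f (Nm 0)) := by
  set G : ℂ → ℂ := fun t => f (Gm t) with hGdef
  set Hs : ℂ → ℂ := fun s => f (Nm s) with hHsdef
  have hG : Differentiable ℂ G :=
    fun t => (diffAt hO hSL hf (det2_Gm t)).comp t (differentiable_Gm t)
  have hHs : Differentiable ℂ Hs :=
    fun s => (diffAt hO hSL hf (det2_Nm s)).comp s (differentiable_Nm s)
  have hrel : ∀ t : ℂ, t ≠ 0 → G t = t * Hs t⁻¹ :=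
    fun t ht => relGN hO hSL hf hE hH ht
  set K : ℂ → ℂ := dslope G 0 with hKdef
  have hKslope : ∀ t : ℂ, t ≠ 0 → K t = (G t - G 0) / t := by
    intro t ht
    rw [hKdef, dslope_of_ne _ ht, slope_def_field, sub_zero]
  have hKdiff : Differentiable ℂ K := by
    intro t
    rcases eq_or_ne t 0 with rfl | ht
    · obtain ⟨p, hp⟩ := hG.analyticAt 0
      exact hp.has_fpower_series_dslope_fslope.analyticAt.differentiableAt
    · rw [hKdef, differentiableAt_dslope_of_ne ht]; exact hG t
  -- boundedness of K
  obtain ⟨C₁, hC₁⟩ := (isCompact_closedBall (0 : ℂ) 1).exists_bound_of_continuousOn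
    hKdiff.continuous.continuousOn
  obtain ⟨C₂, hC₂⟩ := (isCompact_closedBall (0 : ℂ) 1).exists_bound_of_continuousOn
    hHs.continuous.continuousOn
  have hKbdd : Bornology.IsBounded (Set.range K) := by
    rw [isBounded_iff_forall_norm_le]
    refine ⟨max C₁ (C₂ + ‖G 0‖), ?_⟩
    rintro x ⟨t, rfl⟩
    rcases le_or_gt ‖t‖ 1 with htle | htgt
    · exact le_max_of_le_left (hC₁ t (by simpa [Metric.mem_closedBall] using htle))
    · have ht : t ≠ 0 := by
        intro h; rw [h] at htgt; simp at htgt; linarith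
      have htinv : ‖t⁻¹‖ ≤ 1 := by
        rw [norm_inv]
        exact inv_le_one_of_one_le₀ htgt.le
      have hGt : G t = t * Hs t⁻¹ := hrel t ht
      have : K t = Hs t⁻¹ - G 0 / t := by
        rw [hKslope t ht, hGt]
        field_simp
      rw [this]
      refine le_max_of_le_right ?_
      calc ‖Hs t⁻¹ - G 0 / t‖ ≤ ‖Hs t⁻¹‖ + ‖G 0 / t‖ := norm_sub_le _ _
        _ ≤ C₂ + ‖G 0‖ := by
            gcongr
            · exact hC₂ t⁻¹ (by simpa [Metric.mem_closedBall] using htinv)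
            · rw [norm_div]
              exact div_le_self (norm_nonneg _) htgt.le
  have hKconst : ∀ t : ℂ, K t = K 1 :=
    fun t => hKdiff.apply_eq_apply_of_bounded hKbdd t 1
  -- linearity of G
  have hGlin : ∀ t : ℂ, G t = G 0 + K 1 * t := by
    intro t
    rcases eq_or_ne t 0 with rfl | ht
    · ring
    · have := hKslope t ht
      rw [hKconst t] at this
      field_simp at this
      linear_combination -this
  -- linearity of Hs away from 0
  have hHslin : ∀ s : ℂ, s ≠ 0 → Hs s = G 0 * s + K 1 := by
    intro s hs
    have hsi : (s⁻¹ : ℂ) ≠ 0 := inv_ne_zero hs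
    have h1 := hrel s⁻¹ hsi
    rw [inv_inv, hGlin s⁻¹] at h1
    field_simp at h1
    linear_combination -h1
  -- value at 0 by continuity
  have hHs0 : Hs 0 = K 1 := by
    have h1 : Filter.Tendsto Hs (nhdsWithin 0 {(0:ℂ)}ᶜ) (nhds (Hs 0)) :=
      (hHs.continuous.tendsto 0).mono_left nhdsWithin_le_nhds
    have h2 : Filter.Tendsto Hs (nhdsWithin 0 {(0:ℂ)}ᶜ) (nhds (K 1)) := by
      have hcont : Filter.Tendsto (fun s : ℂ => G 0 * s + K 1) (nhdsWithin 0 {(0:ℂ)}ᶜ)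
          (nhds (K 1)) := by
        have : Filter.Tendsto (fun s : ℂ => G 0 * s + K 1) (nhds 0) (nhds (G 0 * 0 + K 1)) :=
          ((continuous_const.mul continuous_id).add continuous_const).tendsto 0
        simpa using this.mono_left nhdsWithin_le_nhds
      refine hcont.congr' ?_
      filter_upwards [self_mem_nhdsWithin] with s hs
      exact (hHslin s hs).symm
    exact tendsto_nhds_unique h1 h2
  constructor
  · intro t
    show G t = G 0 + Hs 0 * t
    rw [hHs0]
    exact hGlin t
  · intro s
    show Hs s = G 0 * s + Hs 0
    rcases eq_or_ne s 0 with rfl | hs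
    · simp
    · rw [hHslin s hs, hHs0]

end ChargeOne

open ChargeOne

/-- Lemma 4.12 (ii) of the paper: a holomorphic function on a neighbourhood of
`SL(2,ℂ)` in `Mat(2,ℂ)` which is analytic (`∂₊₊ f = 0`) of charge `+1`
(`∂₀ f = f`) on `SL(2,ℂ)` is linear in the first column: `f = f₁ u₊¹ + f₂ u₊²`
with constants `f₁, f₂ ∈ ℂ`. -/
theorem global_charge_one_analytic_is_linear
    (O : Set (Fin 2 → Fin 2 → ℂ)) (hO : IsOpen O)
    (hSL : {U : Fin 2 → Fin 2 → ℂ | det2 U = 1} ⊆ O)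
    (f : (Fin 2 → Fin 2 → ℂ) → ℂ) (hf : DifferentiableOn ℂ f O)
    (hE : ∀ U : Fin 2 → Fin 2 → ℂ, det2 U = 1 → fderiv ℂ f U (dirE U) = 0)
    (hH : ∀ U : Fin 2 → Fin 2 → ℂ, det2 U = 1 → fderiv ℂ f U (dirH U) = f U) :
    ∃ f₁ f₂ : ℂ, ∀ U : Fin 2 → Fin 2 → ℂ, det2 U = 1 →
      f U = f₁ * U 0 0 + f₂ * U 1 0 := by
  obtain ⟨hGlin, hHslin⟩ := linearGN hO hSL hf hE hH
  refine ⟨f (Gm 0), f (Nm 0), ?_⟩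
  intro U hU
  have hdet : U 0 0 * U 1 1 - U 0 1 * U 1 0 = 1 := hU
  rcases eq_or_ne (U 0 0) 0 with hc | hc
  · -- first-column top entry zero, use the `Nm` family; U 1 0 ≠ 0
    have hd : U 1 0 ≠ 0 := by
      intro h
      rw [hc, h] at hdet
      simp at hdet
    obtain ⟨z, hz⟩ : ∃ z : ℂ, Complex.exp z = U 1 0 := by
      have : U 1 0 ∈ Set.range Complex.exp := by rw [Complex.range_exp]; exact hd
      exact this
    have hzneg : Complex.exp (-z) = (U 1 0)⁻¹ := by rw [Complex.exp_neg, hz]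
    have hkey : colAdd (colScale (Nm (U 0 0 / U 1 0)) z) (U 1 1 / U 1 0) = U := by
      funext i j
      fin_cases i <;> fin_cases j
      all_goals simp [colAdd, colScale, Nm, hz, hzneg]
      all_goals field_simp
      all_goals first
          | linear_combination hdet
          | linear_combination -hdet
    have hdet1 : det2 (colScale (Nm (U 0 0 / U 1 0)) z) = 1 := by
      rw [det2_colScale]; exact det2_Nm _
    calc f U = f (colAdd (colScale (Nm (U 0 0 / U 1 0)) z) (U 1 1 / U 1 0)) := by rw [hkey]
      _ = f (colScale (Nm (U 0 0 / U 1 0)) z) := flowE hO hSL hf hE hdet1 _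
      _ = Complex.exp z * f (Nm (U 0 0 / U 1 0)) := flowH hO hSL hf hH (det2_Nm _) z
      _ = U 1 0 * (f (Gm 0) * (U 0 0 / U 1 0) + f (Nm 0)) := by rw [hz, hHslin]
      _ = f (Gm 0) * U 0 0 + f (Nm 0) * U 1 0 := by field_simp; try ring
  · -- use the `Gm` family
    obtain ⟨z, hz⟩ : ∃ z : ℂ, Complex.exp z = U 0 0 := by
      have : U 0 0 ∈ Set.range Complex.exp := by rw [Complex.range_exp]; exact hc
      exact this
    have hzneg : Complex.exp (-z) = (U 0 0)⁻¹ := by rw [Complex.exp_neg, hz]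
    have hkey : colAdd (colScale (Gm (U 1 0 / U 0 0)) z) (U 0 1 / U 0 0) = U := by
      funext i j
      fin_cases i <;> fin_cases j
      all_goals simp [colAdd, colScale, Gm, hz, hzneg]
      all_goals field_simp
      all_goals first
          | linear_combination hdet
          | linear_combination -hdet
    have hdet1 : det2 (colScale (Gm (U 1 0 / U 0 0)) z) = 1 := by
      rw [det2_colScale]; exact det2_Gm _
    calc f U = f (colAdd (colScale (Gm (U 1 0 / U 0 0)) z) (U 0 1 / U 0 0)) := by rw [hkey]
      _ = f (colScale (Gm (U 1 0 / U 0 0)) z) := flowE hO hSL hf hE hdet1 _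
      _ = Complex.exp z * f (Gm (U 1 0 / U 0 0)) := flowH hO hSL hf hH (det2_Gm _) z
      _ = U 0 0 * (f (Gm 0) + f (Nm 0) * (U 1 0 / U 0 0)) := by rw [hz, hGlin]
      _ = f (Gm 0) * U 0 0 + f (Nm 0) * U 1 0 := by field_simp; try ring

end
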